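/- If X is a smooth affine variety over a field k of characteristic zero that is rigid (admits no nontrivial action of the additive group G_a), and Y is any variety such that there is an isomorphism X × A¹ ≅ Y × A¹ of k-varieties, then X ≅ Y. -/
import Mathlib


/- STATEMENT 0: If X is a smooth affine variety over a field k of characteristic zero
that is rigid (no nontrivial G_a-action), and Y is any variety with X × 𝔸¹ ≅ Y × 𝔸¹,
then X ≅ Y.  Algebraic formulation: X = Spec A with A a smooth finite type k-algebra;
in characteristic zero, G_a-actions on X correspond to locally nilpotent k-derivations
of A, so rigidity means every locally nilpotent derivation is zero.  Cylinders
correspond to polynomial rings. -/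

open Polynomial Finset



section IterLeibniz

variable {K R : Type} [CommRing K] [CommRing R] [Algebra K R]

/-- Iterated Leibniz rule for a derivation on a commutative ring. -/
theorem Derivation.iterate_leibniz (D : Derivation K R R) (p q : R) (n : ℕ) :
    (⇑D)^[n] (p * q) =
      ∑ k ∈ range n.succ, (n.choose k • ((⇑D)^[n - k] p * (⇑D)^[k] q)) := by
  have hmul : ∀ x y : R, D (x * y) = D x * y + x * D y := by
    intro x y; rw [D.leibniz, smul_eq_mul, smul_eq_mul]; ring
  induction n with
  | zero =>
    simp [Finset.range]
  | succ n IH =>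
    calc
      (⇑D)^[n + 1] (p * q) =
          D (∑ k ∈ range n.succ,
              n.choose k • ((⇑D)^[n - k] p * (⇑D)^[k] q)) := by
        rw [Function.iterate_succ_apply', IH]
      _ = (∑ k ∈ range n.succ,
            n.choose k • ((⇑D)^[n - k + 1] p * (⇑D)^[k] q)) +
          ∑ k ∈ range n.succ,
            n.choose k • ((⇑D)^[n - k] p * (⇑D)^[k + 1] q) := by
        rw [map_sum]
        simp_rw [map_nsmul, hmul, Function.iterate_succ_apply',
          smul_add, sum_add_distrib]
      _ = (∑ k ∈ range n.succ,
                n.choose k.succ • ((⇑D)^[n - k] p * (⇑D)^[k + 1] q)) +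
              1 • ((⇑D)^[n + 1] p * (⇑D)^[0] q) +
            ∑ k ∈ range n.succ, n.choose k • ((⇑D)^[n - k] p * (⇑D)^[k + 1] q) :=
        ?_
      _ = ((∑ k ∈ range n.succ, n.choose k • ((⇑D)^[n - k] p * (⇑D)^[k + 1] q)) +
              ∑ k ∈ range n.succ,
                n.choose k.succ • ((⇑D)^[n - k] p * (⇑D)^[k + 1] q)) +
            1 • ((⇑D)^[n + 1] p * (⇑D)^[0] q) := by
        rw [add_comm, add_assoc]
      _ = (∑ i ∈ range n.succ,
              (n + 1).choose (i + 1) • ((⇑D)^[n + 1 - (i + 1)] p * (⇑D)^[i + 1] q)) +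
            1 • ((⇑D)^[n + 1] p * (⇑D)^[0] q) := by
        simp_rw [Nat.choose_succ_succ, Nat.succ_sub_succ, add_smul, sum_add_distrib]
      _ = ∑ k ∈ range n.succ.succ,
            n.succ.choose k • ((⇑D)^[n.succ - k] p * (⇑D)^[k] q) := by
        rw [sum_range_succ' _ n.succ, Nat.choose_zero_right, tsub_zero]
    congr
    refine (sum_range_succ' _ _).trans (congr_arg₂ (· + ·) ?_ ?_)
    · rw [sum_range_succ, Nat.choose_succ_self, zero_smul, add_zero]
      refine sum_congr rfl fun k hk => ?_
      rw [mem_range] at hk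
      congr
      omega
    · rw [Nat.choose_zero_right, tsub_zero]

end IterLeibniz





section FactF

variable {K R : Type} [CommRing K] [CommRing R] [Algebra K R]

theorem iter_zero_stable (f : R → R) (hf : f 0 = 0) {x : R} {n m : ℕ}
    (h : f^[n] x = 0) (hnm : n ≤ m) : f^[m] x = 0 := by
  obtain ⟨j, rfl⟩ := Nat.exists_eq_add_of_le hnm
  rw [add_comm, Function.iterate_add_apply, h, Function.iterate_fixed hf]

theorem Derivation.lnd_no_self_dvd [IsDomain R] [CharZero R]
    (D : Derivation K R R) (hD : ∀ p : R, ∃ n, (⇑D)^[n] p = 0)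
    {r s : R} (h : D r = r * s) : D r = 0 := by
  by_contra hne
  have hr : r ≠ 0 := fun h0 => hne (h0 ▸ map_zero D)
  have hs : s ≠ 0 := fun h0 => hne (by rw [h, h0, mul_zero])
  -- degree of r
  have degex : ∀ x : R, x ≠ 0 → ∃ d : ℕ, (⇑D)^[d] x ≠ 0 ∧ (⇑D)^[d+1] x = 0 := by
    intro x hx
    have hex := hD x
    classical
    have hpos : 0 < Nat.find hex := by
      rcases Nat.eq_zero_or_pos (Nat.find hex) with h1 | h1
      · have := Nat.find_spec hex
        rw [h1] at this
        exact absurd this hx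
      · exact h1
    refine ⟨Nat.find hex - 1, Nat.find_min hex (by omega), ?_⟩
    have := Nat.find_spec hex
    rwa [Nat.sub_add_cancel hpos]
  obtain ⟨n, hn, hn'⟩ := degex r hr
  obtain ⟨m, hm, hm'⟩ := degex s hs
  have hnpos : 1 ≤ n := by
    rcases Nat.eq_zero_or_pos n with rfl | h
    · exact absurd (by simpa using hn') hne
    · exact h
  -- compute D^[n+m] (r*s)
  have key : (⇑D)^[n+m] (r * s) = (n+m).choose m • ((⇑D)^[n] r * (⇑D)^[m] s) := by
    rw [D.iterate_leibniz]
    rw [Finset.sum_eq_single m]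
    · rw [Nat.add_sub_cancel]
    · intro k hk hkm
      rcases Nat.lt_or_ge k m with hlt | hge
      · have hz : (⇑D)^[n + m - k] r = 0 := by
          have : n + 1 ≤ n + m - k := by omega
          exact iter_zero_stable _ (map_zero D) hn' this
        rw [hz, zero_mul, smul_zero]
      · have : (⇑D)^[k] s = 0 :=
          iter_zero_stable _ (map_zero D) hm' (by omega)
        rw [this, mul_zero, smul_zero]
    · intro hc
      exact absurd (Finset.mem_range.mpr (by omega)) hc
  have hz : (⇑D)^[n+m] (r * s) = 0 := by
    rw [← h, ← Function.iterate_succ_apply]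
    exact iter_zero_stable _ (map_zero D) hn' (by omega)
  rw [hz] at key
  have : ((n+m).choose m : R) ≠ 0 := by
    exact_mod_cast Nat.cast_ne_zero.mpr (Nat.choose_pos (by omega : m ≤ n + m)).ne'
  rw [nsmul_eq_mul] at key
  have := mul_ne_zero this (mul_ne_zero hn hm)
  exact this key.symm

end FactF


section Core
variable {k : Type} [Field k] [CharZero k]
variable {A : Type} [CommRing A] [IsDomain A] [Algebra k A]

theorem coeff_monomial_mul'' (m j : ℕ) (a : A) (w : A[X]) :
    (monomial m a * w).coeff (m + j) = a * w.coeff j := by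
  rw [← C_mul_X_pow_eq_monomial, mul_assoc, coeff_C_mul, add_comm m j,
    coeff_X_pow_mul]

theorem natDegree_le_iff' {p : A[X]} {N : ℕ} :
    p.natDegree ≤ N ↔ ∀ j, N < j → p.coeff j = 0 := by
  constructor
  · intro h j hj
    exact coeff_eq_zero_of_natDegree_lt (lt_of_le_of_lt h hj)
  · intro h
    by_contra hc
    push_neg at hc
    have := h p.natDegree hc
    rcases eq_or_ne p 0 with rfl | hp
    · simp at hc
    · exact leadingCoeff_ne_zero.mpr hp this

theorem iter_zero_stable' {R : Type} [CommRing R] (f : R[X] → R[X]) (hf : f 0 = 0)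
    {x : R[X]} {n m : ℕ} (h : f^[n] x = 0) (hnm : n ≤ m) : f^[m] x = 0 := by
  obtain ⟨j, rfl⟩ := Nat.exists_eq_add_of_le hnm
  rw [add_comm, Function.iterate_add_apply, h, Function.iterate_fixed hf]

theorem semi_rigid_aux
    (rigid : ∀ Δ : Derivation k A A, (∀ a, ∃ n, (⇑Δ)^[n] a = 0) → Δ = 0)
    (D : Derivation k A[X] A[X]) (hD : ∀ p : A[X], ∃ n, (⇑D)^[n] p = 0)
    (e : ℕ)
    (hmax : ∀ (n j : ℕ) (b : A), n + e < j → (D (monomial n b)).coeff j = 0)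
    (hwit : ∃ (n : ℕ) (b : A), (D (monomial n b)).coeff (n + e) ≠ 0) : False := by
  classical
  haveI : CharZero A := charZero_of_injective_algebraMap (algebraMap k A).injective
  have hmulD : ∀ x y : A[X], D (x * y) = D x * y + x * D y := by
    intro x y; rw [D.leibniz, smul_eq_mul, smul_eq_mul]; ring
  -- the top graded component of D
  set de : A[X] → A[X] :=
    fun p => p.sum (fun n b => monomial (n + e) ((D (monomial n b)).coeff (n + e))) with hde
  have de_monomial : ∀ (n : ℕ) (b : A),
      de (monomial n b) = monomial (n + e) ((D (monomial n b)).coeff (n + e)) := by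
    intro n b
    apply Polynomial.sum_monomial_index
    simp
  have de_zero : de 0 = 0 := Polynomial.sum_zero_index _
  have de_add : ∀ p q, de (p + q) = de p + de q := by
    intro p q
    apply Polynomial.sum_add_index
    · intro i; simp
    · intro i b c
      rw [(monomial i).map_add, map_add, coeff_add, (monomial (i + e)).map_add]
  -- degree bound lemma
  have L1 : ∀ (p : A[X]) (N : ℕ), p.natDegree ≤ N → (D p).natDegree ≤ N + e := by
    intro p N hp
    rw [natDegree_le_iff']
    intro j hj
    have hdp : D p = ∑ n ∈ p.support, D (monomial n (p.coeff n)) := by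
      conv_lhs => rw [p.as_sum_support]
      rw [map_sum]
    rw [hdp, finset_sum_coeff]
    apply Finset.sum_eq_zero
    intro n hn
    have h1 : n ≤ N := le_trans (le_natDegree_of_ne_zero (Polynomial.mem_support_iff.mp hn)) hp
    exact hmax n j _ (by omega)
  -- top coefficient lemma
  have L2 : ∀ (q : A[X]) (N : ℕ), q.natDegree ≤ N →
      (D q).coeff (N + e) = (D (monomial N (q.coeff N))).coeff (N + e) := by
    intro q N hq
    conv_lhs => rw [q.as_sum_range' (N + 1) (lt_of_le_of_lt hq (Nat.lt_succ_self N))]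
    rw [map_sum, finset_sum_coeff, Finset.sum_range_succ]
    have : ∀ i ∈ Finset.range N, (D (monomial i (q.coeff i))).coeff (N + e) = 0 := by
      intro i hi
      rw [Finset.mem_range] at hi
      exact hmax i _ _ (by omega)
    rw [Finset.sum_congr rfl this, Finset.sum_const_zero, zero_add]
  -- degree bound for iterates
  have KDeg : ∀ (K n : ℕ) (b : A), ((⇑D)^[K] (monomial n b)).natDegree ≤ n + K * e := by
    intro K
    induction K with
    | zero => intro n b; simpa using natDegree_monomial_le b
    | succ K IH =>
      intro n b
      rw [Function.iterate_succ_apply']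
      have := L1 _ _ (IH n b)
      apply le_trans this
      exact le_of_eq (by ring)
  -- iterates of de track top coefficients of iterates of D
  have KI : ∀ (K n : ℕ) (b : A),
      (de)^[K] (monomial n b)
        = monomial (n + K * e) (((⇑D)^[K] (monomial n b)).coeff (n + K * e)) := by
    intro K
    induction K with
    | zero => intro n b; simp
    | succ K IH =>
      intro n b
      rw [show n + (K + 1) * e = n + K * e + e by ring]
      rw [Function.iterate_succ_apply', IH, de_monomial]
      congr 1
      rw [Function.iterate_succ_apply' (⇑D) K (monomial n b)]
      exact (L2 ((⇑D)^[K] (monomial n b)) (n + K * e) (KDeg K n b)).symm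
  -- de is locally nilpotent
  have de_lnd : ∀ p : A[X], ∃ K, (de)^[K] p = 0 := by
    intro p
    induction p using Polynomial.induction_on' with
    | add p q hp hq =>
      obtain ⟨K1, h1⟩ := hp
      obtain ⟨K2, h2⟩ := hq
      have de_iter_add : ∀ (K : ℕ) (p q : A[X]),
          (de)^[K] (p + q) = (de)^[K] p + (de)^[K] q := by
        intro K
        induction K with
        | zero => intro p q; simp
        | succ K IH =>
          intro p q
          rw [Function.iterate_succ_apply', IH, de_add,
            ← Function.iterate_succ_apply' de K p, ← Function.iterate_succ_apply' de K q]
      refine ⟨K1 + K2, ?_⟩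
      rw [de_iter_add,
        iter_zero_stable' de de_zero h1 (by omega),
        iter_zero_stable' de de_zero h2 (by omega), add_zero]
    | monomial n b =>
      obtain ⟨K, hK⟩ := hD (monomial n b)
      exact ⟨K, by rw [KI, hK, coeff_zero, (monomial _).map_zero]⟩
  -- Leibniz rule for de
  have de_leibniz : ∀ p q : A[X], de (p * q) = p * de q + q * de p := by
    intro p q
    induction p using Polynomial.induction_on' with
    | add u v hu hv =>
      rw [add_mul, de_add, hu, hv, de_add]
      ring
    | monomial m a =>
      induction q using Polynomial.induction_on' with
      | add u v hu hv =>
        rw [mul_add, de_add, hu, hv, de_add]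
        ring
      | monomial n b =>
        have hc : (D (monomial (m + n) (a * b))).coeff (m + n + e)
            = a * (D (monomial n b)).coeff (n + e)
              + b * (D (monomial m a)).coeff (m + e) := by
          rw [← monomial_mul_monomial, hmulD, coeff_add, add_comm]
          congr 1
          · rw [show m + n + e = m + (n + e) by ring, coeff_monomial_mul'']
          · rw [mul_comm (D (monomial m a)) (monomial n b),
              show m + n + e = n + (m + e) by ring, coeff_monomial_mul'']
        rw [monomial_mul_monomial, de_monomial, de_monomial, de_monomial, hc,
          (monomial (m + n + e)).map_add, monomial_mul_monomial, monomial_mul_monomial,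
          show m + (n + e) = m + n + e by ring, show n + (m + e) = m + n + e by ring]
  -- bundle de as a derivation
  have de_smul : ∀ (c : k) (p : A[X]), de (c • p) = c • de p := by
    intro c p
    have h2 : de (algebraMap k A[X] c) = 0 := by
      rw [Polynomial.algebraMap_apply, ← monomial_zero_left, de_monomial,
        monomial_zero_left, ← Polynomial.algebraMap_apply, Derivation.map_algebraMap,
        coeff_zero, (monomial _).map_zero]
    rw [Algebra.smul_def, de_leibniz, h2, mul_zero, add_zero, ← Algebra.smul_def]
  have de_one : de 1 = 0 := by
    rw [← monomial_zero_one, de_monomial, monomial_zero_one, D.map_one_eq_zero,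
      coeff_zero, (monomial _).map_zero]
  let De : Derivation k A[X] A[X] :=
    { toFun := de
      map_add' := de_add
      map_smul' := fun c p => by simpa using de_smul c p
      map_one_eq_zero' := de_one
      leibniz' := fun p q => by
        show de (p * q) = p • de q + q • de p
        rw [smul_eq_mul, smul_eq_mul]
        exact de_leibniz p q }
  have hDe : ⇑De = de := rfl
  have De_lnd : ∀ p : A[X], ∃ n, (⇑De)^[n] p = 0 := by rw [hDe]; exact de_lnd
  have hXfact : De X = X * monomial e ((D (monomial 1 1)).coeff (1 + e)) := by
    show de X = X * monomial e ((D (monomial 1 1)).coeff (1 + e))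
    rw [← monomial_one_one_eq_X, de_monomial, monomial_mul_monomial, one_mul]
  have de_X : de X = 0 := by
    rw [← hDe]
    exact Derivation.lnd_no_self_dvd De De_lnd hXfact
  have de_Xpow : ∀ m : ℕ, de (X ^ m : A[X]) = 0 := by
    intro m
    induction m with
    | zero => rw [pow_zero]; exact de_one
    | succ m IH => rw [pow_succ, de_leibniz, IH, de_X, mul_zero, mul_zero, add_zero]
  set δ : A → A := fun b => (D (monomial 0 b)).coeff e with hδ
  have de_C : ∀ b : A, de (C b) = monomial e (δ b) := by
    intro b
    show de (C b) = monomial e ((D (monomial 0 b)).coeff e)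
    rw [← monomial_zero_left, de_monomial, zero_add]
  have de_mon' : ∀ (m : ℕ) (b : A), de (monomial m b) = monomial (m + e) (δ b) := by
    intro m b
    conv_lhs => rw [← C_mul_X_pow_eq_monomial]
    rw [de_leibniz, de_Xpow, mul_zero, zero_add, de_C, X_pow_eq_monomial,
      monomial_mul_monomial, one_mul]
  have δ_add : ∀ a b : A, δ (a + b) = δ a + δ b := by
    intro a b
    show (D (monomial 0 (a + b))).coeff e = (D (monomial 0 a)).coeff e + (D (monomial 0 b)).coeff e
    rw [(monomial 0).map_add, map_add, coeff_add]
  have δ_mul : ∀ a b : A, δ (a * b) = a * δ b + b * δ a := by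
    intro a b
    have h1 : de (C (a * b)) = monomial e (δ (a * b)) := de_C _
    have h2 : de (C (a * b)) = monomial e (a * δ b + b * δ a) := by
      rw [map_mul, de_leibniz, de_C, de_C, C_mul_monomial, C_mul_monomial,
        ← (monomial e).map_add]
    have h3 := congrArg (fun q => Polynomial.coeff q e) (h1.symm.trans h2)
    simpa [coeff_monomial] using h3
  have δ_alg : ∀ c : k, δ (algebraMap k A c) = 0 := by
    intro c
    show (D (monomial 0 (algebraMap k A c))).coeff e = 0
    rw [monomial_zero_left, ← Polynomial.algebraMap_apply, Derivation.map_algebraMap,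
      coeff_zero]
  have δ_smul : ∀ (c : k) (a : A), δ (c • a) = c • δ a := by
    intro c a
    rw [Algebra.smul_def, δ_mul, δ_alg, mul_zero, add_zero, ← Algebra.smul_def]
  have δ_one : δ 1 = 0 := by
    have h1 : (1 : A) = algebraMap k A 1 := (map_one _).symm
    rw [h1, δ_alg]
  let Δ : Derivation k A A :=
    { toFun := δ
      map_add' := δ_add
      map_smul' := fun c a => by simpa using δ_smul c a
      map_one_eq_zero' := δ_one
      leibniz' := fun a b => by
        show δ (a * b) = a • δ b + b • δ a
        rw [smul_eq_mul, smul_eq_mul]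
        exact δ_mul a b }
  have hΔcoe : ⇑Δ = δ := rfl
  have iterC : ∀ (K : ℕ) (b : A), (de)^[K] (C b) = monomial (K * e) (δ^[K] b) := by
    intro K
    induction K with
    | zero =>
      intro b
      simp [monomial_zero_left]
    | succ K IH =>
      intro b
      rw [show (K + 1) * e = K * e + e by ring, Function.iterate_succ_apply', IH, de_mon',
        Function.iterate_succ_apply' δ K b]
  have Δ_lnd : ∀ a : A, ∃ n, (⇑Δ)^[n] a = 0 := by
    intro a
    obtain ⟨K, hK⟩ := de_lnd (C a)
    refine ⟨K, ?_⟩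
    have h4 := iterC K a
    rw [hK] at h4
    rw [hΔcoe]
    exact (monomial_eq_zero_iff _ _).mp h4.symm
  have hΔ0 : Δ = 0 := rigid Δ Δ_lnd
  have δ0 : ∀ b : A, δ b = 0 := by
    intro b
    have : Δ b = 0 := by rw [hΔ0]; simp
    exact this
  obtain ⟨n, b, hnb⟩ := hwit
  apply hnb
  have h1 : de (monomial n b) = 0 := by rw [de_mon', δ0, (monomial _).map_zero]
  rw [de_monomial] at h1
  exact (monomial_eq_zero_iff _ _).mp h1



theorem semi_rigid [Algebra.FiniteType k A]
    (rigid : ∀ Δ : Derivation k A A, (∀ a, ∃ n, (⇑Δ)^[n] a = 0) → Δ = 0)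
    (D : Derivation k A[X] A[X]) (hD : ∀ p : A[X], ∃ n, (⇑D)^[n] p = 0) :
    ∀ a : A, D (C a) = 0 := by
  classical
  by_contra hc
  push_neg at hc
  obtain ⟨a₀, ha₀⟩ := hc
  have hmulD : ∀ x y : A[X], D (x * y) = D x * y + x * D y := by
    intro x y; rw [D.leibniz, smul_eq_mul, smul_eq_mul]; ring
  obtain ⟨s, hs⟩ := Algebra.FiniteType.out (R := k) (A := A)
  set M := s.sup (fun a => (D (C a)).natDegree) with hM
  have hMa : ∀ a : A, (D (C a)).natDegree ≤ M := by
    intro a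
    have ha : a ∈ Algebra.adjoin k (↑s : Set A) := by rw [hs]; trivial
    induction ha using Algebra.adjoin_induction with
    | mem x hx =>
      rw [hM]
      exact Finset.le_sup (f := fun a => (D (C a)).natDegree) (Finset.mem_coe.mp hx)
    | algebraMap r =>
      rw [← Polynomial.algebraMap_apply, Derivation.map_algebraMap]
      simp
    | add x y hx hy ihx ihy =>
      rw [map_add, map_add]
      exact le_trans (natDegree_add_le _ _) (max_le ihx ihy)
    | mul x y hx hy ihx ihy =>
      rw [map_mul, hmulD]
      refine le_trans (natDegree_add_le _ _) (max_le ?_ ?_)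
      · exact le_trans natDegree_mul_le (by simpa using ihx)
      · exact le_trans natDegree_mul_le (by simpa using ihy)
  set E := max M (D X).natDegree with hE
  have hEmono : ∀ (n j : ℕ) (b : A), n + E < j → (D (monomial n b)).coeff j = 0 := by
    intro n j b hj
    apply coeff_eq_zero_of_natDegree_lt
    have hdeg : (D (monomial n b)).natDegree ≤ n + E := by
      rw [show (monomial n b : A[X]) = C b * X ^ n from (C_mul_X_pow_eq_monomial).symm,
        hmulD]
      refine le_trans (natDegree_add_le _ _) (max_le ?_ ?_)
      · refine le_trans natDegree_mul_le ?_
        rw [natDegree_X_pow]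
        have h1 : M ≤ E := le_max_left _ _
        have h2 := hMa b
        omega
      · refine le_trans natDegree_mul_le ?_
        have h3 : (D (X ^ n : A[X])).natDegree ≤ n + E := by
          rw [D.leibniz_pow, smul_eq_mul, nsmul_eq_mul]
          refine le_trans natDegree_mul_le ?_
          rw [natDegree_natCast]
          refine le_trans (le_of_eq (zero_add _)) (le_trans natDegree_mul_le ?_)
          rw [natDegree_X_pow]
          have h4 : (D (X : A[X])).natDegree ≤ E := le_max_right _ _
          omega
        rw [natDegree_C]
        omega
    omega
  have hwit0 : ∃ j : ℕ, (D (monomial 0 a₀)).coeff (0 + j) ≠ 0 := by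
    by_contra hno
    push_neg at hno
    apply ha₀
    rw [← monomial_zero_left]
    exact Polynomial.ext (fun j => by simpa using hno j)
  obtain ⟨j₀, hj₀⟩ := hwit0
  set P : ℕ → Prop := fun i => ∃ (n : ℕ) (b : A), (D (monomial n b)).coeff (n + i) ≠ 0 with hP
  have hP0 : P j₀ := ⟨0, a₀, hj₀⟩
  have hPle : ∀ i, P i → i ≤ E := by
    rintro i ⟨n, b, hi⟩
    by_contra hgt
    push_neg at hgt
    exact hi (hEmono n _ b (by omega))
  set e := Nat.findGreatest P E with he
  have hPe : P e := Nat.findGreatest_spec (hPle j₀ hP0) hP0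
  have hmax : ∀ (n j : ℕ) (b : A), n + e < j → (D (monomial n b)).coeff j = 0 := by
    intro n j b hj
    rcases le_or_gt j (n + E) with hle | hlt
    · by_contra hc0
      have hPi : P (j - n) := ⟨n, b, by rwa [show n + (j - n) = j by omega]⟩
      have h5 : e < j - n := by omega
      have h6 : j - n ≤ E := by omega
      rw [he] at h5
      exact Nat.findGreatest_is_greatest h5 h6 hPi
    · exact hEmono n j b hlt
  exact semi_rigid_aux rigid D hD e hmax hPe

end Core


theorem rigid_cancellation
    (k : Type) [Field k] [CharZero k]
    (A B : Type) [CommRing A] [CommRing B] [Algebra k A] [Algebra k B]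
    [Algebra.Smooth k A] [Algebra.FiniteType k A]    -- X = Spec A smooth affine variety
    [IsDomain A] [IsDomain B] [Algebra.FiniteType k B]  -- Y = Spec B a variety
    (rigid : ∀ D : Derivation k A A,
      (∀ a : A, ∃ n : ℕ, (D.toLinearMap ^ n) a = 0) → D = 0)
    (h : Nonempty (Polynomial A ≃ₐ[k] Polynomial B)) :
    Nonempty (A ≃ₐ[k] B) := by
  classical
  obtain ⟨φ⟩ := h
  haveI : CharZero A := charZero_of_injective_algebraMap (algebraMap k A).injective
  haveI : CharZero B := charZero_of_injective_algebraMap (algebraMap k B).injective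
  let D : Derivation k (Polynomial A) (Polynomial A) :=
    { toFun := fun p => φ.symm (derivative (φ p))
      map_add' := by intro p q; simp
      map_smul' := by intro c p; simp
      map_one_eq_zero' := by simp
      leibniz' := by
        intro p q
        show φ.symm (derivative (φ (p * q)))
          = p • φ.symm (derivative (φ q)) + q • φ.symm (derivative (φ p))
        rw [smul_eq_mul, smul_eq_mul, map_mul, derivative_mul, map_add, map_mul, map_mul,
          AlgEquiv.symm_apply_apply, AlgEquiv.symm_apply_apply]
        ring }
  have hDcoe : ∀ p, D p = φ.symm (derivative (φ p)) := fun _ => rfl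
  have hmulD : ∀ x y : Polynomial A, D (x * y) = D x * y + x * D y := by
    intro x y; rw [D.leibniz, smul_eq_mul, smul_eq_mul]; ring
  have hDiter : ∀ (n : ℕ) (p : Polynomial A), (⇑D)^[n] p = φ.symm (derivative^[n] (φ p)) := by
    intro n
    induction n with
    | zero => intro p; simp
    | succ n IH =>
      intro p
      rw [Function.iterate_succ_apply', IH, hDcoe, AlgEquiv.apply_symm_apply,
        ← Function.iterate_succ_apply' derivative n (φ p)]
  have hD : ∀ p : Polynomial A, ∃ n, (⇑D)^[n] p = 0 := by
    intro p
    refine ⟨(φ p).natDegree + 1, ?_⟩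
    rw [hDiter, iterate_derivative_eq_zero (Nat.lt_succ_self _), map_zero]
  have rigid' : ∀ Δ : Derivation k A A, (∀ a, ∃ n, (⇑Δ)^[n] a = 0) → Δ = 0 := by
    intro Δ hΔ
    apply rigid
    intro a
    obtain ⟨n, hn⟩ := hΔ a
    exact ⟨n, by rw [Module.End.pow_apply]; exact hn⟩
  have hsemi := semi_rigid rigid' D hD
  have hconst : ∀ a : A, derivative (φ (C a)) = 0 := by
    intro a
    have h2 : φ.symm (derivative (φ (C a))) = 0 := hsemi a
    have h3 := congrArg φ h2
    rwa [AlgEquiv.apply_symm_apply, map_zero] at h3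
  have hDformula : ∀ p : Polynomial A, D p = D X * derivative p := by
    intro p
    induction p using Polynomial.induction_on' with
    | add u v hu hv => rw [map_add, hu, hv, map_add, mul_add]
    | monomial n b =>
      rw [show (monomial n b : Polynomial A) = C b * X ^ n
        from (C_mul_X_pow_eq_monomial).symm]
      have hCb : D (C b) = 0 := hsemi b
      rw [hmulD, hCb, zero_mul, zero_add, derivative_mul, derivative_C, zero_mul, zero_add,
        D.leibniz_pow, derivative_X_pow, smul_eq_mul, nsmul_eq_mul, ← C_eq_natCast]
      ring
  have hDX : D X ≠ 0 := by
    intro h0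
    have h1 : D (φ.symm X) = 1 := by
      rw [hDcoe, AlgEquiv.apply_symm_apply, derivative_X, map_one]
    rw [hDformula, h0, zero_mul] at h1
    exact zero_ne_one h1
  have hker : ∀ p : Polynomial A, D p = 0 → p = C (p.coeff 0) := by
    intro p hp
    rw [hDformula] at hp
    rcases mul_eq_zero.mp hp with h | h
    · exact absurd h hDX
    · exact eq_C_of_derivative_eq_zero h
  have hψ : ∀ a : A, φ (C a) = C ((φ (C a)).coeff 0) := by
    intro a
    exact eq_C_of_derivative_eq_zero (hconst a)
  have hχ : ∀ b : B, φ.symm (C b) = C ((φ.symm (C b)).coeff 0) := by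
    intro b
    apply hker
    rw [hDcoe, AlgEquiv.apply_symm_apply, derivative_C, map_zero]
  set ψ : A → B := fun a => (φ (C a)).coeff 0 with hψdef
  set χ : B → A := fun b => (φ.symm (C b)).coeff 0 with hχdef
  have key : ∀ a : A, C (ψ a) = φ (C a) := fun a => (hψ a).symm
  have key' : ∀ b : B, C (χ b) = φ.symm (C b) := fun b => (hχ b).symm
  refine ⟨{ toFun := ψ, invFun := χ, left_inv := ?_, right_inv := ?_,
            map_mul' := ?_, map_add' := ?_, commutes' := ?_ }⟩
  · intro a
    apply C_injective (R := A)
    rw [key', key, AlgEquiv.symm_apply_apply]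
  · intro b
    apply C_injective (R := B)
    rw [key, key', AlgEquiv.apply_symm_apply]
  · intro a b
    apply C_injective (R := B)
    rw [map_mul, key, key, key, map_mul, map_mul]
  · intro a b
    apply C_injective (R := B)
    rw [map_add, key, key, key, map_add, map_add]
  · intro c
    apply C_injective (R := B)
    rw [key, ← Polynomial.algebraMap_apply, ← Polynomial.algebraMap_apply,
      AlgEquiv.commutes]
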